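/- arXiv:2203.12518 — 2 statements merged into one kernel-verified Lean document; each statement's English description precedes it below -/
import Mathlib

section
/- Let K be a finite group, Y = K, and let S be the set of all words of length at most 3 in the alphabet Y ∪ Y^{-1} representing the identity in K. Let X = Y ∪ {t} and, in the free group F(X), let R = S ∪ {[a^{t^i}, b^{t^j}] : a, b ∈ Y, i, j ∈ ℤ, i ≠ j} (so that ⟨X | R⟩ presents the wreath product K wr ℤ), and for k ∈ ℕ let R_k = S ∪ {[a^{t^i}, b^{t^j}] : a, b ∈ Y, i ≠ j, |i| ≤ k, |j| ≤ k}. Then every word w ∈ F(X) of length ‖w‖ ≤ k lying in the normal closure ⟪R⟫ lies in the normal closure ⟪R_k⟫. -/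
open Function

namespace IsoSpecPaper

variable {ι : Type*} {G : Type*} [Group G]

/-- The (reduced) length of an element of a free group. -/
noncomputable def wnorm (w : FreeGroup ι) : ℕ :=
  @FreeGroup.norm ι (Classical.decEq ι) w

/-- `triv φ k` : the set of words of length at most `k` in the generators
(and their inverses) representing the identity of `G` under the marking `φ`. -/
noncomputable def triv (φ : FreeGroup ι →* G) (k : ℕ) : Set (FreeGroup ι) :=
  {w | wnorm w ≤ k ∧ φ w = 1}

/-- `AreaLe R w l` : `w` is a product of `l` conjugates of elements of `R` or
their inverses in the free group. -/
def AreaLe (R : Set (FreeGroup ι)) (w : FreeGroup ι) (l : ℕ) : Prop :=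
  ∃ L : List (FreeGroup ι × FreeGroup ι), L.length = l ∧
    (∀ p ∈ L, p.2 ∈ R ∨ p.2⁻¹ ∈ R) ∧
    w = (L.map fun p => p.1⁻¹ * p.2 * p.1).prod

/-- The area of `w` with respect to the set of relators `R`. -/
noncomputable def area (R : Set (FreeGroup ι)) (w : FreeGroup ι) : ℕ :=
  sInf {l | AreaLe R w l}

/-- The isoperimetric spectrum of the marked group `(G, φ)`:
`isoSpec φ k m n = max { area_{S_m}(w) : w ∈ ⟪S_k⟫, ‖w‖ ≤ n }`. -/
noncomputable def isoSpec (φ : FreeGroup ι →* G) (k m n : ℕ) : ℕ :=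
  sSup (area (triv φ m) '' {w | w ∈ Subgroup.normalClosure (triv φ k) ∧ wnorm w ≤ n})

/-- The real-valued isoperimetric spectrum. -/
noncomputable def isoSpecR (φ : FreeGroup ι →* G) : ℕ → ℕ → ℕ → ℝ :=
  fun k m n => (isoSpec φ k m n : ℝ)

/-- The Dehn function of the presentation with relators `R`. -/
noncomputable def dehn (R : Set (FreeGroup ι)) (n : ℕ) : ℕ :=
  sSup (area R '' {w | w ∈ Subgroup.normalClosure R ∧ wnorm w ≤ n})

/-- The quasi-order `f ≼ g` on functions of triples `(k,m,n)` of positive integers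
with `m ≥ k`. -/
def SpecLE (f g : ℕ → ℕ → ℕ → ℝ) : Prop :=
  ∃ C : ℕ, 0 < C ∧ ∀ k m n : ℕ, 0 < k → 0 < m → 0 < n → C * k ≤ m →
    f k (C * m) n ≤ C * g (C * k) m (C * n) + C * (n : ℝ) / m + C

/-- Equivalence of isoperimetric functions: `f ∼ g`. -/
def SpecEquiv (f g : ℕ → ℕ → ℕ → ℝ) : Prop := SpecLE f g ∧ SpecLE g f

/-- The linear spectrum `(k,m,n) ↦ n/m`. -/
noncomputable def linSpec : ℕ → ℕ → ℕ → ℝ := fun _ m n => (n : ℝ) / m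

/-- The word length of `g ∈ G` with respect to the marking `φ`. -/
noncomputable def wlen (φ : FreeGroup ι →* G) (g : G) : ℕ :=
  sInf {n | ∃ w : FreeGroup ι, wnorm w = n ∧ φ w = g}

/-- The word metric on `G` with respect to the marking `φ`. -/
noncomputable def wdist (φ : FreeGroup ι →* G) (g h : G) : ℕ := wlen φ (g⁻¹ * h)

/-- Quasi-isometry of marked groups with respect to their word metrics. -/
noncomputable def QuasiIsometric {H : Type*} [Group H] {κ : Type*}
    (φ : FreeGroup ι →* G) (ψ : FreeGroup κ →* H) : Prop :=
  ∃ L : ℝ, 0 ≤ L ∧ ∃ (α : G → H) (β : H → G),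
    (∀ x y : G, (wdist ψ (α x) (α y) : ℝ) ≤ L * wdist φ x y + L) ∧
    (∀ u v : H, (wdist φ (β u) (β v) : ℝ) ≤ L * wdist ψ u v + L) ∧
    (∀ t : H, (wdist ψ (α (β t)) t : ℝ) ≤ L) ∧
    (∀ s : G, (wdist φ (β (α s)) s : ℝ) ≤ L)

/-- A (combinatorial) geodesic path of length `n` in the Cayley graph of `(G, φ)`:
consecutive vertices are at distance at most `1` and the endpoints are at
distance exactly `n`. -/
noncomputable def IsGeodesic (φ : FreeGroup ι →* G) {n : ℕ} (p : Fin (n + 1) → G) : Prop :=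
  (∀ i : Fin n, wdist φ (p i.castSucc) (p i.succ) ≤ 1) ∧
  wdist φ (p 0) (p (Fin.last n)) = n

/-- Every vertex of the path `p` lies within distance `δ` of the set `A`. -/
noncomputable def ThinAt (φ : FreeGroup ι →* G) (δ : ℝ) {n : ℕ}
    (p : Fin (n + 1) → G) (A : Set G) : Prop :=
  ∀ i, ∃ a ∈ A, (wdist φ (p i) a : ℝ) ≤ δ

/-- The Cayley graph of `(G, φ)` is `δ`-hyperbolic: every geodesic triangle is `δ`-thin. -/
noncomputable def HypConst (φ : FreeGroup ι →* G) (δ : ℝ) : Prop :=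
  ∀ (n₁ n₂ n₃ : ℕ) (p : Fin (n₁ + 1) → G) (q : Fin (n₂ + 1) → G) (r : Fin (n₃ + 1) → G),
    IsGeodesic φ p → IsGeodesic φ q → IsGeodesic φ r →
    p (Fin.last n₁) = q 0 → q (Fin.last n₂) = r 0 → r (Fin.last n₃) = p 0 →
    ThinAt φ δ p (Set.range q ∪ Set.range r) ∧
    ThinAt φ δ q (Set.range r ∪ Set.range p) ∧
    ThinAt φ δ r (Set.range p ∪ Set.range q)

/-- The marked group `(G, φ)` is hyperbolic. -/
noncomputable def IsHyperbolic (φ : FreeGroup ι →* G) : Prop :=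
  ∃ δ : ℝ, 0 ≤ δ ∧ HypConst φ δ

/-- `G` (marked by `φ`) is a limit (direct limit) of hyperbolic groups. -/
noncomputable def LimitOfHyperbolic (φ : FreeGroup ι →* G) : Prop :=
  Surjective φ ∧ ∃ R : ℕ → Set (FreeGroup ι),
    (∀ i j, i ≤ j → R i ⊆ R j) ∧
    φ.ker = Subgroup.normalClosure (⋃ i, R i) ∧
    ∀ i, IsHyperbolic (QuotientGroup.mk' (Subgroup.normalClosure (R i)))

/-- `G` (marked by `φ`) is well-approximated by hyperbolic groups. -/
noncomputable def WellApproximated (φ : FreeGroup ι →* G) : Prop :=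
  Surjective φ ∧ ∃ R : ℕ → Set (FreeGroup ι),
    (∀ i j, i ≤ j → R i ⊆ R j) ∧
    φ.ker = Subgroup.normalClosure (⋃ i, R i) ∧
    (∀ i, IsHyperbolic (QuotientGroup.mk' (Subgroup.normalClosure (R i)))) ∧
    ∃ C : ℕ, 0 < C ∧ ∀ i : ℕ, 0 < i →
      (∀ w : FreeGroup ι, wnorm w ≤ i → φ w = 1 →
        w ∈ Subgroup.normalClosure (R i)) ∧
      HypConst (QuotientGroup.mk' (Subgroup.normalClosure (R i))) ((C * i : ℕ) : ℝ)

variable (K : Type) [Group K]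

/-- The generator `t` of the `ℤ`-factor, inside the free group on `X = K ⊕ {t}`. -/
def tGen : FreeGroup (K ⊕ Unit) := FreeGroup.of (Sum.inr ())

/-- The generator corresponding to `a ∈ K = Y`. -/
def yGen (a : K) : FreeGroup (K ⊕ Unit) := FreeGroup.of (Sum.inl a)

/-- Conjugation `x^{t^i} = (t^i)⁻¹ x t^i`. -/
def conjT (x : FreeGroup (K ⊕ Unit)) (i : ℤ) : FreeGroup (K ⊕ Unit) :=
  (tGen K ^ i)⁻¹ * x * tGen K ^ i

/-- The commutator `[x, y] = x⁻¹ y⁻¹ x y`. -/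
def commE {H : Type*} [Group H] (x y : H) : H := x⁻¹ * y⁻¹ * x * y

/-- The set `S` of all words of length at most `3` in the alphabet `Y ∪ Y⁻¹` (with
`Y = K`) representing the identity of `K`. -/
noncomputable def wreathS : Set (FreeGroup (K ⊕ Unit)) :=
  (FreeGroup.map (Sum.inl : K → K ⊕ Unit)) ''
    {u : FreeGroup K | wnorm u ≤ 3 ∧ FreeGroup.lift (id : K → K) u = 1}

/-- The full set of relators `R = S ∪ {[a^{t^i}, b^{t^j}] : a, b ∈ Y, i ≠ j}` of the
standard presentation of `K wr ℤ`. -/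
noncomputable def wreathR : Set (FreeGroup (K ⊕ Unit)) :=
  wreathS K ∪
    {w | ∃ (a b : K) (i j : ℤ), i ≠ j ∧
      w = commE (conjT K (yGen K a) i) (conjT K (yGen K b) j)}

/-- The truncated set of relators `R_k` with `|i|, |j| ≤ k`. -/
noncomputable def wreathRk (k : ℕ) : Set (FreeGroup (K ⊕ Unit)) :=
  wreathS K ∪
    {w | ∃ (a b : K) (i j : ℤ), i ≠ j ∧ |i| ≤ (k : ℤ) ∧ |j| ≤ (k : ℤ) ∧
      w = commE (conjT K (yGen K a) i) (conjT K (yGen K b) j)}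

/-! ### Auxiliary material for Statement 11 -/

section Aux

open SemidirectProduct Multiplicative

/-- Dirac delta at level `i`, as a homomorphism `K →* (ℤ → K)`. -/
def deltaH (i : ℤ) : K →* (ℤ → K) where
  toFun a := fun j => if j = i then a else 1
  map_one' := by funext j; simp
  map_mul' a b := by funext j; by_cases h : j = i <;> simp [h]

/-- The shift automorphism of `ℤ → K`. -/
def shiftE (z : ℤ) : (ℤ → K) ≃* (ℤ → K) where
  toFun f := fun i => f (i + z)
  invFun f := fun i => f (i - z)
  left_inv f := by funext i; simp
  right_inv f := by funext i; simp
  map_mul' f g := rfl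

/-- The shift action of `ℤ` on `ℤ → K`. -/
def shiftHom : Multiplicative ℤ →* MulAut (ℤ → K) where
  toFun z := shiftE K z.toAdd
  map_one' := by
    refine MulEquiv.ext fun f => funext fun i => ?_
    simp [shiftE]
  map_mul' z w := by
    refine MulEquiv.ext fun f => funext fun i => ?_
    simp [shiftE, MulAut.mul_apply, add_assoc]

/-- The model of the wreath product `K wr ℤ`. -/
abbrev WrM := (ℤ → K) ⋊[shiftHom K] Multiplicative ℤ

/-- The images of the generators in the model. -/
def evg : K ⊕ Unit → WrM K
  | Sum.inl a => SemidirectProduct.inl (deltaH K 0 a)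
  | Sum.inr _ => SemidirectProduct.inr (Multiplicative.ofAdd 1)

/-- Evaluation of words in the model of `K wr ℤ`. -/
def ev : FreeGroup (K ⊕ Unit) →* WrM K := FreeGroup.lift (evg K)

lemma ev_tpow (i : ℤ) : ev K (tGen K ^ i) = SemidirectProduct.inr (Multiplicative.ofAdd i) := by
  have h : ev K (tGen K) = SemidirectProduct.inr (Multiplicative.ofAdd (1 : ℤ)) :=
    FreeGroup.lift_apply_of
  rw [map_zpow, h, ← map_zpow]
  congr 1
  rw [← ofAdd_zsmul]
  simp

lemma conjT_inv (x : FreeGroup (K ⊕ Unit)) (i : ℤ) : (conjT K x i)⁻¹ = conjT K x⁻¹ i := by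
  simp [conjT, mul_assoc]

lemma conjT_mul (x y : FreeGroup (K ⊕ Unit)) (i : ℤ) :
    conjT K x i * conjT K y i = conjT K (x * y) i := by
  simp [conjT, mul_assoc]

lemma conjT_one (i : ℤ) : conjT K 1 i = 1 := by simp [conjT]

lemma ev_conjT_yGen (a : K) (i : ℤ) :
    ev K (conjT K (yGen K a) i) = SemidirectProduct.inl (deltaH K i a) := by
  have h0 : ev K (yGen K a) = SemidirectProduct.inl (deltaH K 0 a) := FreeGroup.lift_apply_of
  have h1 : ev K (conjT K (yGen K a) i) =
      SemidirectProduct.inr (Multiplicative.ofAdd i)⁻¹ *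
        SemidirectProduct.inl (deltaH K 0 a) *
        SemidirectProduct.inr (Multiplicative.ofAdd i) := by
    rw [conjT, map_mul, map_mul, map_inv, ev_tpow, h0, map_inv]
  have h2 := SemidirectProduct.inl_aut (φ := shiftHom K)
    ((Multiplicative.ofAdd i)⁻¹) (deltaH K 0 a)
  rw [inv_inv] at h2
  rw [h1, ← h2]
  congr 1
  funext j
  have hj : j + ((Multiplicative.ofAdd i)⁻¹ : Multiplicative ℤ).toAdd = j - i := by
    simp [sub_eq_add_neg]
  by_cases h : j = i
  · simp [shiftHom, shiftE, deltaH, hj, h]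
  · have h2 : ¬ (j + -i = 0) := by omega
    have h3 : ¬ (j - i = 0) := by omega
    simp [shiftHom, shiftE, deltaH, hj, h, h2, h3]

lemma ev_ker_wreathR : wreathR K ⊆ ((ev K).ker : Set (FreeGroup (K ⊕ Unit))) := by
  rintro w (⟨u, ⟨_, hu1⟩, rfl⟩ | ⟨a, b, i, j, hij, rfl⟩)
  · have hcomp : (ev K).comp (FreeGroup.map (Sum.inl : K → K ⊕ Unit)) =
        ((SemidirectProduct.inl : (ℤ → K) →* WrM K).comp (deltaH K 0)).comp
          (FreeGroup.lift (id : K → K)) := by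
      apply FreeGroup.ext_hom
      intro a
      simp [ev, evg, FreeGroup.map.of, FreeGroup.lift_apply_of]
    have h := DFunLike.congr_fun hcomp u
    simp only [MonoidHom.comp_apply] at h
    rw [SetLike.mem_coe, MonoidHom.mem_ker, h, hu1, map_one, map_one]
  · rw [SetLike.mem_coe, MonoidHom.mem_ker]
    set X := ev K (conjT K (yGen K a) i) with hX
    set Y := ev K (conjT K (yGen K b) j) with hY
    have hc : X * Y = Y * X := by
      rw [hX, hY, ev_conjT_yGen, ev_conjT_yGen, ← map_mul, ← map_mul]
      congr 1
      funext p
      by_cases hpi : p = i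
      · by_cases hpj : p = j
        · exact absurd (hpi.symm.trans hpj) hij
        · simp [deltaH, hpi, hpj, hij, Ne.symm hij, Pi.mul_apply]
      · by_cases hpj : p = j
        · simp [deltaH, hpi, hpj, hij, Ne.symm hij, Pi.mul_apply]
        · simp [deltaH, hpi, hpj, Pi.mul_apply]
    have hE : ev K (commE (conjT K (yGen K a) i) (conjT K (yGen K b) j)) =
        X⁻¹ * Y⁻¹ * (X * Y) := by
      rw [commE]
      simp only [map_mul, map_inv, mul_assoc]
      rfl
    rw [hE, hc]
    group

lemma closure_wreathR_le_ker :
    Subgroup.normalClosure (wreathR K) ≤ (ev K).ker :=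
  Subgroup.normalClosure_le_normal (ev_ker_wreathR K)

/-- Signed generator letter. -/
def sY : K × Bool → FreeGroup (K ⊕ Unit)
  | (a, true) => yGen K a
  | (a, false) => (yGen K a)⁻¹

/-- Signed value of a letter in `K`. -/
def kv : K × Bool → K
  | (a, true) => a
  | (a, false) => a⁻¹

/-- A conjugated signed letter. -/
def fac (p : (K × Bool) × ℤ) : FreeGroup (K ⊕ Unit) := conjT K (sY K p.1) p.2

lemma ev_fac (p : (K × Bool) × ℤ) :
    ev K (fac K p) = SemidirectProduct.inl (deltaH K p.2 (kv K p.1)) := by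
  obtain ⟨⟨a, b⟩, i⟩ := p
  cases b
  · show ev K (conjT K (yGen K a)⁻¹ i) = SemidirectProduct.inl (deltaH K i a⁻¹)
    rw [← conjT_inv, map_inv, ev_conjT_yGen, ← map_inv, ← map_inv]
  · exact ev_conjT_yGen K a i

lemma tpow_conjT (ε i : ℤ) (x : FreeGroup (K ⊕ Unit)) :
    tGen K ^ ε * conjT K x i = conjT K x (i - ε) * tGen K ^ ε := by
  unfold conjT
  group

lemma tpow_prod (ε : ℤ) (L : List ((K × Bool) × ℤ)) :
    tGen K ^ ε * (L.map (fac K)).prod =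
      ((L.map (fun p => (p.1, p.2 - ε))).map (fac K)).prod * tGen K ^ ε := by
  induction L with
  | nil => simp
  | cons p L ih =>
    have hfac : tGen K ^ ε * fac K p = fac K (p.1, p.2 - ε) * tGen K ^ ε :=
      tpow_conjT K ε p.2 (sY K p.1)
    calc tGen K ^ ε * ((p :: L).map (fac K)).prod
        = (tGen K ^ ε * fac K p) * (L.map (fac K)).prod := by
          simp [mul_assoc]
      _ = fac K (p.1, p.2 - ε) * (tGen K ^ ε * (L.map (fac K)).prod) := by
          rw [hfac, mul_assoc]
      _ = fac K (p.1, p.2 - ε) *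
            (((L.map (fun p => (p.1, p.2 - ε))).map (fac K)).prod * tGen K ^ ε) := by
          rw [ih]
      _ = _ := by simp [mul_assoc]

lemma decomp (l : List ((K ⊕ Unit) × Bool)) :
    ∃ (L : List ((K × Bool) × ℤ)) (m : ℤ),
      FreeGroup.mk l = (L.map (fac K)).prod * tGen K ^ m ∧
      ∀ p ∈ L, |p.2| ≤ (l.length : ℤ) := by
  induction l with
  | nil =>
    refine ⟨[], 0, ?_, by simp⟩
    rw [← FreeGroup.one_eq_mk]
    simp
  | cons x l ih =>
    obtain ⟨L, m, hEq, hB⟩ := ih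
    have hx : FreeGroup.mk (x :: l) = FreeGroup.mk [x] * FreeGroup.mk l := by
      rw [FreeGroup.mul_mk, List.singleton_append]
    obtain ⟨s, b⟩ := x
    cases s with
    | inl a =>
      refine ⟨((a, b), 0) :: L, m, ?_, ?_⟩
      · have hone : FreeGroup.mk [(Sum.inl a, b)] = fac K ((a, b), 0) := by
          cases b
          · show FreeGroup.mk [(Sum.inl a, false)] = conjT K (yGen K a)⁻¹ 0
            simp only [conjT, zpow_zero, inv_one, one_mul, mul_one]
            rfl
          · show FreeGroup.mk [(Sum.inl a, true)] = conjT K (yGen K a) 0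
            simp only [conjT, zpow_zero, inv_one, one_mul, mul_one]
            rfl
        rw [hx, hEq, hone, List.map_cons, List.prod_cons, mul_assoc]
      · intro p hp
        rcases List.mem_cons.mp hp with h | h
        · subst h
          simp
          omega
        · have := hB p h
          have hle : (l.length : ℤ) ≤ ((Sum.inl a, b) :: l).length := by
            simp
          omega
    | inr u =>
      set ε : ℤ := if b then 1 else -1 with hε
      have hmk : FreeGroup.mk [(Sum.inr u, b)] = tGen K ^ ε := by
        cases u
        cases b
        · show FreeGroup.mk [(Sum.inr (), false)] = tGen K ^ (-1 : ℤ)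
          rw [zpow_neg_one]
          rfl
        · show FreeGroup.mk [(Sum.inr (), true)] = tGen K ^ (1 : ℤ)
          rw [zpow_one]
          rfl
      refine ⟨L.map (fun p => (p.1, p.2 - ε)), m + ε, ?_, ?_⟩
      · calc FreeGroup.mk ((Sum.inr u, b) :: l)
            = tGen K ^ ε * ((L.map (fac K)).prod * tGen K ^ m) := by
              rw [hx, hmk, hEq]
          _ = (tGen K ^ ε * (L.map (fac K)).prod) * tGen K ^ m := by
              rw [mul_assoc]
          _ = (((L.map (fun p => (p.1, p.2 - ε))).map (fac K)).prod * tGen K ^ ε)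
                * tGen K ^ m := by rw [tpow_prod]
          _ = ((L.map (fun p => (p.1, p.2 - ε))).map (fac K)).prod * tGen K ^ (m + ε) := by
              rw [mul_assoc, ← zpow_add, add_comm]
      · intro p hp
        rw [List.mem_map] at hp
        obtain ⟨q, hq, rfl⟩ := hp
        have h1 := hB q hq
        have h2 : |ε| ≤ 1 := by
          rw [hε]
          cases b <;> simp
        have h3 : |q.2 - ε| ≤ |q.2| + |ε| := abs_sub q.2 ε
        have h4 : (((Sum.inr u, b) :: l).length : ℤ) = (l.length : ℤ) + 1 := by
          simp
        simp only [h4]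
        omega

section Sorting

variable {Q : Type*} [Group Q]

lemma prod_split (j : ℤ) (M : List (Q × ℤ))
    (hcomm : ∀ p ∈ M, ∀ q ∈ M, p.2 ≠ q.2 → Commute p.1 q.1) :
    (M.map Prod.fst).prod =
      ((M.filter (fun p => p.2 = j)).map Prod.fst).prod *
      ((M.filter (fun p => p.2 ≠ j)).map Prod.fst).prod := by
  induction M with
  | nil => simp
  | cons p M ih =>
    have hcomm' : ∀ a ∈ M, ∀ b ∈ M, a.2 ≠ b.2 → Commute a.1 b.1 := fun a ha b hb =>
      hcomm a (List.mem_cons_of_mem _ ha) b (List.mem_cons_of_mem _ hb)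
    by_cases hp : p.2 = j
    · rw [List.filter_cons_of_pos (by simp [hp]), List.filter_cons_of_neg (by simp [hp])]
      simp only [List.map_cons, List.prod_cons, ih hcomm', mul_assoc]
    · rw [List.filter_cons_of_neg (by simp [hp]), List.filter_cons_of_pos (by simp [hp])]
      simp only [List.map_cons, List.prod_cons]
      rw [ih hcomm']
      have hc : Commute p.1 ((M.filter (fun q => q.2 = j)).map Prod.fst).prod := by
        apply Commute.list_prod_right
        intro x hx
        rw [List.mem_map] at hx
        obtain ⟨q, hq, rfl⟩ := hx
        rw [List.mem_filter] at hq
        have hq2 : q.2 = j := by simpa using hq.2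
        exact hcomm p (List.mem_cons_self) q (List.mem_cons_of_mem _ hq.1)
          (by rw [hq2]; exact hp)
      rw [← mul_assoc, hc.eq, mul_assoc]

lemma prod_eq_one_blocks : ∀ (n : ℕ) (M : List (Q × ℤ)), M.length ≤ n →
    (∀ p ∈ M, ∀ q ∈ M, p.2 ≠ q.2 → Commute p.1 q.1) →
    (∀ j : ℤ, ((M.filter (fun p => p.2 = j)).map Prod.fst).prod = 1) →
    (M.map Prod.fst).prod = 1 := by
  intro n
  induction n with
  | zero =>
    intro M hM _ _
    have : M = [] := List.eq_nil_of_length_eq_zero (Nat.le_zero.mp hM)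
    simp [this]
  | succ n ih =>
    intro M hlen hcomm hblock
    match M with
    | [] => simp
    | p :: M' =>
      rw [prod_split p.2 _ hcomm, hblock p.2, one_mul]
      have hfil : (p :: M').filter (fun q => q.2 ≠ p.2) =
          M'.filter (fun q => q.2 ≠ p.2) :=
        List.filter_cons_of_neg (by simp)
      rw [hfil]
      have hsub : ∀ q ∈ M'.filter (fun q => q.2 ≠ p.2), q ∈ p :: M' := fun q hq =>
        List.mem_cons_of_mem _ (List.mem_of_mem_filter hq)
      apply ih
      · calc (M'.filter (fun q => q.2 ≠ p.2)).length ≤ M'.length :=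
              List.length_filter_le _ _
          _ ≤ n := by
              have : M'.length + 1 ≤ n + 1 := by simpa using hlen
              omega
      · exact fun a ha b hb => hcomm a (hsub a ha) b (hsub b hb)
      · intro j
        by_cases hj : j = p.2
        · have hnil : (M'.filter (fun q => q.2 ≠ p.2)).filter (fun q => q.2 = j) = [] := by
            rw [List.filter_eq_nil_iff]
            intro a ha
            have h2 : a.2 ≠ p.2 := by simpa using (List.mem_filter.mp ha).2
            simp [hj, h2]
          rw [hnil]
          simp
        · have h1 : (M'.filter (fun q => q.2 ≠ p.2)).filter (fun q => q.2 = j) =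
              M'.filter (fun q => q.2 = j) := by
            rw [List.filter_filter]
            apply List.filter_congr
            intro a _
            by_cases h : a.2 = j
            · simp [h, hj]
            · simp [h]
          have hp2 : ¬ p.2 = j := fun hh => hj hh.symm
          have h2 : (p :: M').filter (fun q => q.2 = j) = M'.filter (fun q => q.2 = j) :=
            List.filter_cons_of_neg (by simp [hp2])
          rw [h1, ← h2]
          exact hblock j

end Sorting

lemma yGen_one_mem : yGen K 1 ∈ wreathS K := by
  letI : DecidableEq K := Classical.decEq K
  refine ⟨FreeGroup.of 1, ⟨?_, by rw [FreeGroup.lift_apply_of]; rfl⟩, by rw [FreeGroup.map.of]; rfl⟩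
  have h1 : wnorm (FreeGroup.of (1 : K)) = 1 := by
    unfold wnorm
    exact FreeGroup.norm_of 1
  omega

lemma prod_sub_mem_S (l : List (K × Bool)) :
    (l.map (sY K)).prod * (yGen K ((l.map (kv K)).prod))⁻¹ ∈
      Subgroup.normalClosure (wreathS K) := by
  letI : DecidableEq K := Classical.decEq K
  induction l with
  | nil =>
    simp only [List.map_nil, List.prod_nil, one_mul]
    exact inv_mem (Subgroup.subset_normalClosure (yGen_one_mem K))
  | cons p l ih =>
    obtain ⟨a, b⟩ := p
    have key : (((a, b) :: l).map (sY K)).prod *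
          (yGen K ((((a, b) :: l).map (kv K)).prod))⁻¹
        = sY K (a, b) * ((l.map (sY K)).prod * (yGen K ((l.map (kv K)).prod))⁻¹) *
            (sY K (a, b))⁻¹ *
          (sY K (a, b) * yGen K ((l.map (kv K)).prod) *
            (yGen K (kv K (a, b) * (l.map (kv K)).prod))⁻¹) := by
      simp only [List.map_cons, List.prod_cons]
      group
    rw [key]
    refine mul_mem (Subgroup.Normal.conj_mem inferInstance _ ih _) ?_
    apply Subgroup.subset_normalClosure
    set c' : K := (l.map (kv K)).prod with hc'
    cases b
    · refine ⟨(FreeGroup.of a)⁻¹ * FreeGroup.of c' * (FreeGroup.of (a⁻¹ * c'))⁻¹,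
        ⟨?_, ?_⟩, ?_⟩
      · unfold wnorm
        calc FreeGroup.norm ((FreeGroup.of a)⁻¹ * FreeGroup.of c' *
                (FreeGroup.of (a⁻¹ * c'))⁻¹)
            ≤ FreeGroup.norm ((FreeGroup.of a)⁻¹ * FreeGroup.of c') +
                FreeGroup.norm (FreeGroup.of (a⁻¹ * c'))⁻¹ := FreeGroup.norm_mul_le _ _
          _ ≤ (FreeGroup.norm (FreeGroup.of a)⁻¹ + FreeGroup.norm (FreeGroup.of c')) +
                FreeGroup.norm (FreeGroup.of (a⁻¹ * c'))⁻¹ := by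
              have := FreeGroup.norm_mul_le (FreeGroup.of a)⁻¹ (FreeGroup.of (α := K) c')
              omega
          _ ≤ 3 := by
              rw [FreeGroup.norm_inv_eq, FreeGroup.norm_inv_eq, FreeGroup.norm_of,
                FreeGroup.norm_of, FreeGroup.norm_of]
      · simp only [map_mul, map_inv, FreeGroup.lift_apply_of, id_eq]
        group
      · show FreeGroup.map Sum.inl _ = sY K (a, false) * yGen K c' * (yGen K (kv K (a, false) * c'))⁻¹
        simp only [map_mul, map_inv, FreeGroup.map.of]
        rfl
    · refine ⟨FreeGroup.of a * FreeGroup.of c' * (FreeGroup.of (a * c'))⁻¹,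
        ⟨?_, ?_⟩, ?_⟩
      · unfold wnorm
        calc FreeGroup.norm (FreeGroup.of a * FreeGroup.of c' *
                (FreeGroup.of (a * c'))⁻¹)
            ≤ FreeGroup.norm (FreeGroup.of a * FreeGroup.of c') +
                FreeGroup.norm (FreeGroup.of (a * c'))⁻¹ := FreeGroup.norm_mul_le _ _
          _ ≤ (FreeGroup.norm (FreeGroup.of a) + FreeGroup.norm (FreeGroup.of c')) +
                FreeGroup.norm (FreeGroup.of (a * c'))⁻¹ := by
              have := FreeGroup.norm_mul_le (FreeGroup.of a) (FreeGroup.of (α := K) c')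
              omega
          _ ≤ 3 := by
              rw [FreeGroup.norm_inv_eq, FreeGroup.norm_of, FreeGroup.norm_of,
                FreeGroup.norm_of]
      · simp only [map_mul, map_inv, FreeGroup.lift_apply_of, id_eq]
        group
      · show FreeGroup.map Sum.inl _ = sY K (a, true) * yGen K c' * (yGen K (kv K (a, true) * c'))⁻¹
        simp only [map_mul, map_inv, FreeGroup.map.of]
        rfl

lemma filter_prod_eq (j : ℤ) (L : List ((K × Bool) × ℤ)) :
    ((L.filter (fun p => p.2 = j)).map (fun p => kv K p.1)).prod
      = (L.map (fun p => if j = p.2 then kv K p.1 else 1)).prod := by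
  induction L with
  | nil => simp
  | cons p L ih =>
    by_cases h : p.2 = j
    · rw [List.filter_cons_of_pos (by simp [h])]
      simp only [List.map_cons, List.prod_cons, ih]
      rw [if_pos h.symm]
    · rw [List.filter_cons_of_neg (by simp [h])]
      simp only [List.map_cons, List.prod_cons, ih]
      rw [if_neg (fun hh => h hh.symm), one_mul]

lemma prod_fac_eq_conjT (j : ℤ) :
    ∀ (L : List ((K × Bool) × ℤ)), (∀ p ∈ L, p.2 = j) →
      (L.map (fac K)).prod = conjT K ((L.map (fun p => sY K p.1)).prod) j := by
  intro L
  induction L with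
  | nil => intro _; simp [conjT_one]
  | cons p L ih =>
    intro hall
    have hp : p.2 = j := hall p (List.mem_cons_self)
    have hrest : ∀ q ∈ L, q.2 = j := fun q hq => hall q (List.mem_cons_of_mem _ hq)
    simp only [List.map_cons, List.prod_cons, ih hrest]
    rw [show fac K p = conjT K (sY K p.1) j by rw [fac, hp], conjT_mul]

end Aux

/-- Every word of length at most `k` lying in the normal closure
`⟪R⟫` already lies in the normal closure `⟪R_k⟫`. -/
theorem wreath_word_in_truncated_normalClosure (hK : Finite K) (k : ℕ) (hk : 0 < k)
    (w : FreeGroup (K ⊕ Unit)) (hw : wnorm w ≤ k)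
    (hmem : w ∈ Subgroup.normalClosure (wreathR K)) :
    w ∈ Subgroup.normalClosure (wreathRk K k) := by
  clear hK hk
  set l : List ((K ⊕ Unit) × Bool) := @FreeGroup.toWord _ (Classical.decEq _) w with hl
  have hwmk : FreeGroup.mk l = w := @FreeGroup.mk_toWord _ (Classical.decEq _) w
  have hlen : (l.length : ℤ) ≤ (k : ℤ) := by
    have h1 : l.length = wnorm w := rfl
    rw [h1]
    exact_mod_cast hw
  obtain ⟨L, m, hEq, hB⟩ := decomp K l
  rw [hwmk] at hEq
  have hB' : ∀ p ∈ L, |p.2| ≤ (k : ℤ) := fun p hp => le_trans (hB p hp) hlen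
  -- evaluate in the model
  have hEv : ev K w = 1 := MonoidHom.mem_ker.mp (closure_wreathR_le_ker K hmem)
  have hEvProd : ∀ L' : List ((K × Bool) × ℤ), ev K ((L'.map (fac K)).prod) =
      SemidirectProduct.inl ((L'.map (fun p => deltaH K p.2 (kv K p.1))).prod) := by
    intro L'
    rw [map_list_prod, map_list_prod, List.map_map, List.map_map]
    congr 1
    apply List.map_congr_left
    intro p _
    exact ev_fac K p
  have hm : m = 0 := by
    have h1 : SemidirectProduct.rightHom (ev K w) = 1 := by rw [hEv, map_one]
    rw [hEq, map_mul, hEvProd, ev_tpow, map_mul, SemidirectProduct.rightHom_inl,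
      SemidirectProduct.rightHom_inr, one_mul] at h1
    have := congrArg Multiplicative.toAdd h1
    simpa using this
  subst hm
  rw [zpow_zero, mul_one] at hEq
  have hP : (L.map (fun p => deltaH K p.2 (kv K p.1))).prod = 1 := by
    apply SemidirectProduct.inl_injective (φ := shiftHom K)
    rw [← hEvProd, ← hEq, hEv, map_one]
  have hlev : ∀ j : ℤ, (L.map (fun p => if j = p.2 then kv K p.1 else 1)).prod = 1 := by
    intro j
    have h1 : (Pi.evalMonoidHom (fun _ : ℤ => K) j)
        ((L.map (fun p => deltaH K p.2 (kv K p.1))).prod) = 1 := by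
      rw [hP, map_one]
    rw [map_list_prod, List.map_map] at h1
    have h2 : L.map (fun p => if j = p.2 then kv K p.1 else 1) =
        L.map (⇑(Pi.evalMonoidHom (fun _ : ℤ => K) j) ∘ fun p => deltaH K p.2 (kv K p.1)) := by
      apply List.map_congr_left
      intro p _
      simp [Pi.evalMonoidHom, deltaH]
    rw [h2]
    exact h1
  have hcfil : ∀ j : ℤ, ((L.filter (fun p => p.2 = j)).map (fun p => kv K p.1)).prod = 1 := by
    intro j
    rw [filter_prod_eq]
    exact hlev j
  -- work in the quotient by the truncated relators
  set N : Subgroup (FreeGroup (K ⊕ Unit)) := Subgroup.normalClosure (wreathRk K k) with hN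
  set σ : FreeGroup (K ⊕ Unit) →* (FreeGroup (K ⊕ Unit)) ⧸ N := QuotientGroup.mk' N with hσ
  have hSle : Subgroup.normalClosure (wreathS K) ≤ N :=
    Subgroup.normalClosure_mono Set.subset_union_left
  -- blocks are trivial in the quotient
  have hblockN : ∀ j : ℤ, σ ((((L.filter (fun p => p.2 = j))).map (fac K)).prod) = 1 := by
    intro j
    set L' := L.filter (fun p => p.2 = j) with hL'
    have hall : ∀ p ∈ L', p.2 = j := fun p hp => by
      simpa using (List.mem_filter.mp hp).2
    rw [prod_fac_eq_conjT K j L' hall]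
    set U : FreeGroup (K ⊕ Unit) := (L'.map (fun p => sY K p.1)).prod with hU
    have hU' : U ∈ N := by
      have h1 := prod_sub_mem_S K (L'.map Prod.fst)
      rw [List.map_map, List.map_map] at h1
      have h2 : ((L'.map (fun p => kv K (Prod.fst p)))).prod = 1 := by
        have := hcfil j
        simpa using this
      have h3 : (L'.map (fun p : (K × Bool) × ℤ => sY K p.1)).prod *
          (yGen K 1)⁻¹ ∈ Subgroup.normalClosure (wreathS K) := by
        have heq : (L'.map (kv K ∘ Prod.fst)).prod = 1 := by
          simpa [Function.comp_def] using h2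
        rw [heq] at h1
        simpa [Function.comp_def] using h1
      have h4 := mul_mem (hSle h3) (hSle (Subgroup.subset_normalClosure (yGen_one_mem K)))
      simpa [hU, mul_assoc] using h4
    have h5 : (tGen K ^ j)⁻¹ * U * ((tGen K ^ j)⁻¹)⁻¹ ∈ N :=
      Subgroup.Normal.conj_mem inferInstance U hU' _
    rw [inv_inv] at h5
    exact (QuotientGroup.eq_one_iff _).mpr h5
  -- commuting of distinct-level factors in the quotient
  have hcomm_fac : ∀ p q : (K × Bool) × ℤ, p.2 ≠ q.2 → |p.2| ≤ (k : ℤ) → |q.2| ≤ (k : ℤ) →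
      Commute (σ (fac K p)) (σ (fac K q)) := by
    rintro ⟨⟨a, ba⟩, i⟩ ⟨⟨c, bc⟩, j⟩ hij hi hj
    simp only at hij hi hj
    have base : ∀ x y : K, Commute (σ (conjT K (yGen K x) i)) (σ (conjT K (yGen K y) j)) := by
      intro x y
      have hrel : commE (conjT K (yGen K x) i) (conjT K (yGen K y) j) ∈ wreathRk K k :=
        Or.inr ⟨x, y, i, j, hij, hi, hj, rfl⟩
      have h1 : σ (commE (conjT K (yGen K x) i) (conjT K (yGen K y) j)) = 1 :=
        (QuotientGroup.eq_one_iff _).mpr (Subgroup.subset_normalClosure hrel)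
      set X := σ (conjT K (yGen K x) i) with hX
      set Y := σ (conjT K (yGen K y) j) with hY
      have h2 : X⁻¹ * Y⁻¹ * X * Y = 1 := by
        rw [hX, hY]
        rw [show (σ (conjT K (yGen K x) i))⁻¹ * (σ (conjT K (yGen K y) j))⁻¹ *
            σ (conjT K (yGen K x) i) * σ (conjT K (yGen K y) j) =
            σ (commE (conjT K (yGen K x) i) (conjT K (yGen K y) j)) by
          rw [commE]; simp only [map_mul, map_inv]]
        exact h1
      show X * Y = Y * X
      have h3 : X * Y = Y * X * (X⁻¹ * Y⁻¹ * X * Y) := by group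
      rw [h3, h2, mul_one]
    have hbase := base a c
    cases ba <;> cases bc
    · show Commute (σ (conjT K (yGen K a)⁻¹ i)) (σ (conjT K (yGen K c)⁻¹ j))
      rw [← conjT_inv, ← conjT_inv, map_inv, map_inv]
      exact hbase.inv_left.inv_right
    · show Commute (σ (conjT K (yGen K a)⁻¹ i)) (σ (conjT K (yGen K c) j))
      rw [← conjT_inv, map_inv]
      exact hbase.inv_left
    · show Commute (σ (conjT K (yGen K a) i)) (σ (conjT K (yGen K c)⁻¹ j))
      rw [← conjT_inv, map_inv]
      exact hbase.inv_right
    · exact hbase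
  -- assemble
  have hgoal : σ w = 1 := by
    rw [hEq, map_list_prod, List.map_map]
    set M : List ((FreeGroup (K ⊕ Unit) ⧸ N) × ℤ) :=
      L.map (fun p => (σ (fac K p), p.2)) with hM
    have hMfst : L.map (⇑σ ∘ fac K) = M.map Prod.fst := by
      rw [hM, List.map_map]
      rfl
    rw [hMfst]
    apply prod_eq_one_blocks M.length M le_rfl
    · intro p hp q hq hne
      rw [hM, List.mem_map] at hp hq
      obtain ⟨p', hp', rfl⟩ := hp
      obtain ⟨q', hq', rfl⟩ := hq
      exact hcomm_fac p' q' hne (hB' p' hp') (hB' q' hq')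
    · intro j
      have hMf : M.filter (fun q => q.2 = j) =
          (L.filter (fun p => p.2 = j)).map (fun p => (σ (fac K p), p.2)) := by
        rw [hM, List.filter_map]
        rfl
      rw [hMf, List.map_map]
      have h6 : (L.filter (fun p => p.2 = j)).map
          (Prod.fst ∘ fun p => (σ (fac K p), p.2)) =
          ((L.filter (fun p => p.2 = j)).map (fac K)).map ⇑σ := by
        rw [List.map_map]
        rfl
      rw [h6, ← map_list_prod]
      exact hblockN j
  exact (QuotientGroup.eq_one_iff w).mp hgoal

end IsoSpecPaper
end

section
/- Let Q be an F_σ quasi-order on a Polish space X, i.e., a reflexive and transitive relation that, as a subset of X × X, is a countable union of closed sets, and let E_Q be the induced equivalence relation: x E_Q y iff x Q y and y Q x. Suppose E_Q is generically ergodic (every E_Q-invariant Borel subset of X is meager or comeager) and that X contains an E_Q-equivalence class that is dense in X and whose complement is also dense in X. Then E_Q is a meager subset of X × X, and X contains a Q-antichain of cardinality 2^{ℵ₀}, i.e., a set of continuum cardinality whose distinct elements are pairwise Q-incomparable. -/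
open Function


open Set Metric Function

namespace MycielskiAux

variable {X : Type*} [MetricSpace X]

/-- Shrink a finite family of nonempty open sets so that prescribed pairs of them
have product inside a given open dense set. -/
lemma shrink_pairs {ι : Type*} [DecidableEq ι] (D : Set (X × X)) (hDo : IsOpen D)
    (hDd : Dense D) (U : ι → Set X) (hUo : ∀ i, IsOpen (U i)) (hUn : ∀ i, (U i).Nonempty) :
    ∀ l : List (ι × ι), ∃ V : ι → Set X, (∀ i, IsOpen (V i)) ∧ (∀ i, (V i).Nonempty) ∧
      (∀ i, V i ⊆ U i) ∧ ∀ p ∈ l, p.1 ≠ p.2 → V p.1 ×ˢ V p.2 ⊆ D := by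
  intro l
  induction l with
  | nil => exact ⟨U, hUo, hUn, fun i => subset_rfl, by simp⟩
  | cons hd tl ih =>
    obtain ⟨V, hVo, hVn, hVU, hVp⟩ := ih
    by_cases hab : hd.1 = hd.2
    · refine ⟨V, hVo, hVn, hVU, ?_⟩
      intro p hp hne
      rcases List.mem_cons.1 hp with rfl | hp
      · exact absurd hab hne
      · exact hVp p hp hne
    · obtain ⟨a, b⟩ := hd
      simp only at hab
      have hne : ((V a ×ˢ V b) ∩ D).Nonempty :=
        hDd.inter_open_nonempty _ ((hVo a).prod (hVo b)) ((hVn a).prod (hVn b))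
      obtain ⟨⟨x, y⟩, ⟨hxV, hyV⟩, hxyD⟩ := hne
      obtain ⟨Wa, Wb, hWao, hWbo, hxW, hyW, hWD⟩ := isOpen_prod_iff.1 hDo x y hxyD
      classical
      set V' : ι → Set X := fun i => if i = a then V a ∩ Wa else if i = b then V b ∩ Wb else V i
        with hV'
      have hVa : V' a = V a ∩ Wa := by simp [hV']
      have hVb : V' b = V b ∩ Wb := by simp [hV', Ne.symm hab]
      have hsub : ∀ i, V' i ⊆ V i := by
        intro i z hz
        by_cases h1 : i = a
        · subst h1; rw [hVa] at hz; exact hz.1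
        · by_cases h2 : i = b
          · subst h2; rw [hVb] at hz; exact hz.1
          · simpa [hV', h1, h2] using hz
      refine ⟨V', ?_, ?_, fun i => (hsub i).trans (hVU i), ?_⟩
      · intro i
        simp only [hV']
        split_ifs <;> [exact (hVo a).inter hWao; exact (hVo b).inter hWbo; exact hVo i]
      · intro i
        by_cases h1 : i = a
        · subst h1; rw [hVa]; exact ⟨x, hxV, hxW⟩
        · by_cases h2 : i = b
          · subst h2; rw [hVb]; exact ⟨y, hyV, hyW⟩
          · simp only [hV', if_neg h1, if_neg h2]; exact hVn i
      · intro p hp hpne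
        rcases List.mem_cons.1 hp with rfl | hp
        · simp only [hVa, hVb]
          exact (prod_mono inter_subset_right inter_subset_right).trans hWD
        · exact (prod_mono (hsub p.1) (hsub p.2)).trans (hVp p hp hpne)

end MycielskiAux

namespace MycielskiAux

variable {X : Type*} [MetricSpace X]

/-- The invariant carried at level `n` of the Cantor scheme. -/
def Good (L : ℕ → Set (X × X)) (n : ℕ) (V : (Fin n → Bool) → Set X) : Prop :=
  (∀ s, IsOpen (V s)) ∧ (∀ s, (V s).Nonempty) ∧
  (∀ s, ∃ c : X, V s ⊆ closedBall c ((1/2 : ℝ)^n)) ∧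
  (∀ s t, s ≠ t → ∀ a ∈ closure (V s), ∀ b ∈ closure (V t), (a, b) ∉ L n)

lemma good_zero (L : ℕ → Set (X × X)) (x0 : X) :
    Good L 0 (fun _ => ball x0 (1/2)) := by
  refine ⟨fun _ => isOpen_ball, fun _ => ⟨x0, mem_ball_self (by norm_num)⟩,
    fun _ => ⟨x0, ?_⟩, fun s t hst => absurd (Subsingleton.elim s t) hst⟩
  simp only [pow_zero]
  exact (ball_subset_closedBall).trans (closedBall_subset_closedBall (by norm_num))

lemma step (L : ℕ → Set (X × X)) (hL : ∀ n, IsClosed (L n) ∧ IsNowhereDense (L n))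
    (n : ℕ) (V : (Fin n → Bool) → Set X) (hV : Good L n V) :
    ∃ W : (Fin (n+1) → Bool) → Set X, Good L (n+1) W ∧
      ∀ s, closure (W s) ⊆ V (Fin.init s) := by
  classical
  obtain ⟨hVo, hVn, -, -⟩ := hV
  have hD : IsOpen (L (n+1))ᶜ ∧ Dense (L (n+1))ᶜ :=
    isClosed_isNowhereDense_iff_compl.1 (hL (n+1))
  obtain ⟨V', hV'o, hV'n, hV'U, hV'p⟩ :=
    shrink_pairs (L (n+1))ᶜ hD.1 hD.2 (fun s : Fin (n+1) → Bool => V (Fin.init s))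
      (fun s => hVo _) (fun s => hVn _)
      ((Finset.univ : Finset ((Fin (n+1) → Bool) × (Fin (n+1) → Bool))).toList)
  have hpair : ∀ s t, s ≠ t → V' s ×ˢ V' t ⊆ (L (n+1))ᶜ := fun s t hst =>
    hV'p (s, t) (Finset.mem_toList.2 (Finset.mem_univ _)) hst
  -- choose centers and radii
  have hcr : ∀ s, ∃ c : X, ∃ r : ℝ, 0 < r ∧ r ≤ (1/2 : ℝ)^(n+1) ∧
      closedBall c r ⊆ V' s := by
    intro s
    obtain ⟨c, hc⟩ := hV'n s
    obtain ⟨r, hr, hrsub⟩ :=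
      Metric.nhds_basis_closedBall.mem_iff.1 ((hV'o s).mem_nhds hc)
    refine ⟨c, min r ((1/2 : ℝ)^(n+1)), lt_min hr (by positivity), min_le_right _ _,
      (closedBall_subset_closedBall (min_le_left _ _)).trans hrsub⟩
  choose c r hr hrle hrsub using hcr
  refine ⟨fun s => ball (c s) (r s), ⟨fun s => isOpen_ball,
    fun s => ⟨c s, mem_ball_self (hr s)⟩, fun s => ⟨c s,
      ball_subset_closedBall.trans (closedBall_subset_closedBall (hrle s))⟩, ?_⟩, ?_⟩
  · intro s t hst a ha b hb
    have ha' : a ∈ V' s := hrsub s (closure_ball_subset_closedBall ha)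
    have hb' : b ∈ V' t := hrsub t (closure_ball_subset_closedBall hb)
    exact hpair s t hst ⟨ha', hb'⟩
  · intro s
    exact (closure_ball_subset_closedBall.trans (hrsub s)).trans (hV'U s)

variable (L : ℕ → Set (X × X)) (hL : ∀ n, IsClosed (L n) ∧ IsNowhereDense (L n)) (x0 : X)

/-- The Cantor scheme. -/
noncomputable def sch : (n : ℕ) → {V : (Fin n → Bool) → Set X // Good L n V}
  | 0 => ⟨_, good_zero L x0⟩
  | (n+1) =>
    ⟨(step L hL n (sch n).1 (sch n).2).choose,
     (step L hL n (sch n).1 (sch n).2).choose_spec.1⟩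

lemma sch_link (n : ℕ) (s : Fin (n+1) → Bool) :
    closure ((sch L hL x0 (n+1)).1 s) ⊆ (sch L hL x0 n).1 (Fin.init s) := by
  have h := (step L hL n (sch L hL x0 n).1 (sch L hL x0 n).2).choose_spec.2 s
  exact h

end MycielskiAux

namespace MycielskiAux

variable {X : Type*} [MetricSpace X] [CompleteSpace X]
variable (L : ℕ → Set (X × X))

/-- restriction of a branch -/
def res (α : ℕ → Bool) (n : ℕ) : Fin n → Bool := fun i => α i

lemma res_init (α : ℕ → Bool) (n : ℕ) : Fin.init (res α (n+1)) = res α n := by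
  funext i
  simp [Fin.init, res]

variable (hL : ∀ n, IsClosed (L n) ∧ IsNowhereDense (L n)) (x0 : X)

set_option linter.unusedSectionVars false

lemma sch_nested (α : ℕ → Bool) {n m : ℕ} (h : n ≤ m) :
    (sch L hL x0 m).1 (res α m) ⊆ (sch L hL x0 n).1 (res α n) := by
  induction m, h using Nat.le_induction with
  | base => exact subset_rfl
  | succ m hnm ih =>
    refine subset_trans ?_ ih
    have := sch_link L hL x0 m (res α (m+1))
    rw [res_init] at this
    exact subset_closure.trans this

lemma exists_branch_limit (α : ℕ → Bool) :
    ∃ y : X, ∀ n, y ∈ closure ((sch L hL x0 n).1 (res α n)) := by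
  have hne : ∀ n, ((sch L hL x0 n).1 (res α n)).Nonempty := fun n =>
    (sch L hL x0 n).2.2.1 _
  choose p hp using hne
  have hmem : ∀ n m, n ≤ m → p m ∈ (sch L hL x0 n).1 (res α n) := fun n m h =>
    sch_nested L hL x0 α h (hp m)
  have hcauchy : CauchySeq p := by
    apply cauchySeq_of_le_tendsto_0 (fun N => 2 * (1/2 : ℝ)^N)
    · intro n m N hn hm
      obtain ⟨cc, hcc⟩ := (sch L hL x0 N).2.2.2.1 (res α N)
      have h1 := hcc (hmem N n hn)
      have h2 := hcc (hmem N m hm)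
      calc dist (p n) (p m) ≤ dist (p n) cc + dist cc (p m) := dist_triangle _ _ _
        _ ≤ (1/2 : ℝ)^N + (1/2 : ℝ)^N := by
            refine add_le_add (mem_closedBall.1 h1) ?_
            rw [dist_comm]
            exact mem_closedBall.1 h2
        _ = 2 * (1/2 : ℝ)^N := by ring
    · have : Filter.Tendsto (fun N : ℕ => (1/2 : ℝ)^N) Filter.atTop (nhds 0) :=
        tendsto_pow_atTop_nhds_zero_of_lt_one (by norm_num) (by norm_num)
      simpa using this.const_mul 2
  obtain ⟨y, hy⟩ := cauchySeq_tendsto_of_complete hcauchy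
  refine ⟨y, fun n => mem_closure_of_tendsto hy ?_⟩
  exact Filter.eventually_atTop.2 ⟨n, fun m hm => hmem n m hm⟩

/-- **Mycielski-style lemma**: given countably many closed nowhere dense subsets of `X × X`,
monotone in `n`, there is a map from Cantor space to `X` all of whose pairs at distinct
arguments avoid all the sets. -/
theorem mycielski (hL : ∀ n, IsClosed (L n) ∧ IsNowhereDense (L n)) (x0 : X)
    (hmono : Monotone L) :
    ∃ f : (ℕ → Bool) → X, ∀ α β : ℕ → Bool, α ≠ β → ∀ m, (f α, f β) ∉ L m := by
  choose f hf using exists_branch_limit L hL x0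
  refine ⟨f, fun α β hne m hmem => ?_⟩
  obtain ⟨k, hk⟩ := Function.ne_iff.1 hne
  set n := max m (k+1) with hn
  have hst : res α n ≠ res β n := by
    intro h
    exact hk (congrFun h ⟨k, lt_of_lt_of_le (Nat.lt_succ_self k) (le_max_right _ _)⟩)
  have := (sch L hL x0 n).2.2.2.2 (res α n) (res β n) hst (f α) (hf α n) (f β) (hf β n)
  exact this (hmono (le_max_left m (k+1)) hmem)

end MycielskiAux

namespace MycielskiAux

variable {Y : Type*} [TopologicalSpace Y]

lemma _root_.IsNowhereDense.isMeagre' {s : Set Y} (hs : IsNowhereDense s) : IsMeagre s := by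
  obtain ⟨t, hst, htnwd, htcl⟩ := hs.subset_of_closed_isNowhereDense
  have h := isClosed_isNowhereDense_iff_compl.1 ⟨htcl, htnwd⟩
  exact IsMeagre.mono hst (residual_of_dense_open h.1 h.2)

lemma _root_.IsMeagre.union' {s t : Set Y} (hs : IsMeagre s) (ht : IsMeagre t) :
    IsMeagre (s ∪ t) := by
  rw [IsMeagre, compl_union]
  exact Filter.inter_mem hs ht

lemma nwd_union {s t : Set Y} (hs : IsClosed s ∧ IsNowhereDense s)
    (ht : IsClosed t ∧ IsNowhereDense t) :
    IsClosed (s ∪ t) ∧ IsNowhereDense (s ∪ t) := by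
  have hs' := isClosed_isNowhereDense_iff_compl.1 hs
  have ht' := isClosed_isNowhereDense_iff_compl.1 ht
  rw [isClosed_isNowhereDense_iff_compl, compl_union]
  exact ⟨hs'.1.inter ht'.1, hs'.2.inter_of_isOpen_left ht'.2 hs'.1⟩

end MycielskiAux

open MycielskiAux Set Metric

/-- Let `Q` be an `F_σ` quasi-order on a Polish space `X` whose induced
equivalence relation `E_Q` is generically ergodic, and suppose `X` contains an
`E_Q`-class that is dense and has dense complement. Then `E_Q` is meager and `X`
contains a `Q`-antichain of cardinality continuum. -/
theorem meager_and_continuum_antichain_of_Fsigma_quasiOrder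
    {X : Type*} [TopologicalSpace X] [PolishSpace X]
    (Q : X → X → Prop)
    (hrefl : ∀ x, Q x x)
    (htrans : ∀ x y z, Q x y → Q y z → Q x z)
    (hFsigma : ∃ F : ℕ → Set (X × X), (∀ i, IsClosed (F i)) ∧
      {p : X × X | Q p.1 p.2} = ⋃ i, F i)
    (hergodic : ∀ A : Set X, @MeasurableSet X (borel X) A →
      (∀ x y, (Q x y ∧ Q y x) → (x ∈ A ↔ y ∈ A)) →
      IsMeagre A ∨ A ∈ residual X)
    (hdense : ∃ x : X, Dense {y : X | Q x y ∧ Q y x} ∧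
      Dense {y : X | ¬ (Q x y ∧ Q y x)}) :
    IsMeagre {p : X × X | Q p.1 p.2 ∧ Q p.2 p.1} ∧
    ∃ f : Set ℕ → X, Injective f ∧
      ∀ I J : Set ℕ, I ≠ J → ¬ Q (f I) (f J) ∧ ¬ Q (f J) (f I) := by
  classical
  obtain ⟨x, hxd, hxcd⟩ := hdense
  obtain ⟨F, hFcl, hFeq⟩ := hFsigma
  haveI : Nonempty X := ⟨x⟩
  letI : MeasurableSpace X := borel X
  haveI : BorelSpace X := ⟨rfl⟩
  letI := TopologicalSpace.upgradeIsCompletelyMetrizable X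
  have hmem : ∀ a b : X, Q a b ↔ ∃ i, (a, b) ∈ F i := by
    intro a b
    have := Set.ext_iff.1 hFeq (a, b)
    simpa [Set.mem_iUnion] using this
  set Cx : Set X := {y : X | Q x y ∧ Q y x} with hCxdef
  have hCx_compl_dense : Dense Cxᶜ := hxcd
  have hCx_int : interior Cx = ∅ := interior_eq_empty_iff_dense_compl.2 hCx_compl_dense
  have hsec1 : ∀ a : X, MeasurableSet {y : X | Q a y} := by
    intro a
    have h : {y : X | Q a y} = ⋃ i, (fun y => (a, y)) ⁻¹' F i := by
      ext y; simp [hmem]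
    rw [h]
    exact MeasurableSet.iUnion fun i =>
      ((hFcl i).preimage (continuous_const.prodMk continuous_id)).measurableSet
  have hsec2 : ∀ a : X, MeasurableSet {y : X | Q y a} := by
    intro a
    have h : {y : X | Q y a} = ⋃ i, (fun y => (y, a)) ⁻¹' F i := by
      ext y; simp [hmem]
    rw [h]
    exact MeasurableSet.iUnion fun i =>
      ((hFcl i).preimage (continuous_id.prodMk continuous_const)).measurableSet
  have hnontriv : ∀ A : Set X, IsMeagre A → A ∈ residual X → False := by
    intro A hm hr
    have h1 : A ∩ Aᶜ ∈ residual X := Filter.inter_mem hr hm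
    rw [Set.inter_compl_self] at h1
    exact absurd (dense_of_mem_residual h1).nonempty (by simp)
  -- the distinguished class is meager: it is F_σ with empty interior
  have hCx_meager : IsMeagre Cx := by
    set D : ℕ × ℕ → Set X :=
      fun p => (fun y => (x, y)) ⁻¹' F p.1 ∩ (fun y => (y, x)) ⁻¹' F p.2 with hD
    have hDC : ∀ p, D p ⊆ Cx := by
      rintro p y ⟨h1, h2⟩
      exact ⟨(hmem x y).2 ⟨p.1, h1⟩, (hmem y x).2 ⟨p.2, h2⟩⟩
    refine isMeagre_iff_countable_union_isNowhereDense.2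
      ⟨Set.range D, ?_, Set.countable_range _, ?_⟩
    · rintro t ⟨p, rfl⟩
      have hcl : IsClosed (D p) :=
        ((hFcl p.1).preimage (continuous_const.prodMk continuous_id)).inter
          ((hFcl p.2).preimage (continuous_id.prodMk continuous_const))
      rw [hcl.isNowhereDense_iff]
      exact eq_empty_of_subset_empty ((interior_mono (hDC p)).trans hCx_int.subset)
    · intro y hy
      obtain ⟨i, hi⟩ := (hmem x y).1 hy.1
      obtain ⟨j, hj⟩ := (hmem y x).1 hy.2
      exact ⟨D (i, j), ⟨(i, j), rfl⟩, hi, hj⟩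
  set Qset : Set (X × X) := {p : X × X | Q p.1 p.2} with hQsetdef
  have hQ_meager : IsMeagre Qset := by
    by_contra hq
    have hFi : ∃ i, (interior (F i)).Nonempty := by
      by_contra h
      push_neg at h
      apply hq
      rw [hFeq]
      exact isMeagre_iUnion fun i => (((hFcl i).isNowhereDense_iff).2 (h i)).isMeagre'
    obtain ⟨i, ⟨⟨a, b⟩, hab⟩⟩ := hFi
    obtain ⟨U, V, hUo, hVo, haU, hbV, hUV⟩ := isOpen_prod_iff.1 isOpen_interior a b hab
    have hUVQ : ∀ u ∈ U, ∀ v ∈ V, Q u v := by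
      intro u hu v hv
      have h' : (u, v) ∈ ⋃ i, F i := Set.mem_iUnion.2 ⟨i, interior_subset (hUV ⟨hu, hv⟩)⟩
      rw [← hFeq] at h'
      exact h'
    obtain ⟨v, hvV, hvC⟩ := hxd.inter_open_nonempty V hVo ⟨b, hbV⟩
    obtain ⟨u, huU, huC⟩ := hxd.inter_open_nonempty U hUo ⟨a, haU⟩
    have hUA : U ⊆ {y : X | Q y x} := fun z hz =>
      htrans z v x (hUVQ z hz v hvV) hvC.2
    have hVB : V ⊆ {y : X | Q x y} := fun z hz =>
      htrans x u z huC.1 (hUVQ u huU z hz)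
    have hnm : ∀ (A : Set X) (W : Set X), IsOpen W → W.Nonempty → W ⊆ A →
        ¬ IsMeagre A := by
      intro A W hWo hWne hWA hm
      obtain ⟨z, hz1, hz2⟩ := (dense_of_mem_residual hm).inter_open_nonempty W hWo hWne
      exact hz2 (hWA hz1)
    have hAres : {y : X | Q y x} ∈ residual X := by
      rcases hergodic _ (hsec2 x) (fun y z hyz =>
        ⟨fun h => htrans z y x hyz.2 h, fun h => htrans y z x hyz.1 h⟩) with h | h
      · exact absurd h (hnm _ U hUo ⟨a, haU⟩ hUA)
      · exact h
    have hBres : {y : X | Q x y} ∈ residual X := by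
      rcases hergodic _ (hsec1 x) (fun y z hyz =>
        ⟨fun h => htrans x y z h hyz.1, fun h => htrans x z y h hyz.2⟩) with h | h
      · exact absurd h (hnm _ V hVo ⟨b, hbV⟩ hVB)
      · exact h
    have hCres : Cx ∈ residual X := by
      have heq : Cx = {y : X | Q x y} ∩ {y : X | Q y x} := rfl
      rw [heq]
      exact Filter.inter_mem hBres hAres
    exact hnontriv Cx hCx_meager hCres
  have hswap_meager : IsMeagre {p : X × X | Q p.2 p.1} := by
    have heq : {p : X × X | Q p.2 p.1} = Prod.swap ⁻¹' Qset := rfl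
    rw [heq]
    exact hQ_meager.preimage_of_isOpenMap continuous_swap
      (Homeomorph.prodComm X X).isOpenMap
  have hR_meager : IsMeagre {p : X × X | Q p.1 p.2 ∨ Q p.2 p.1} := by
    have heq : {p : X × X | Q p.1 p.2 ∨ Q p.2 p.1} = Qset ∪ {p : X × X | Q p.2 p.1} := rfl
    rw [heq]
    exact hQ_meager.union' hswap_meager
  obtain ⟨S, hSnwd, hScnt, hScov⟩ :=
    isMeagre_iff_countable_union_isNowhereDense.1 hR_meager
  have hSne : S.Nonempty := by
    rcases Set.eq_empty_or_nonempty S with rfl | h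
    · exfalso
      have hx' : ((x, x) : X × X) ∈ ⋃₀ (∅ : Set (Set (X × X))) :=
        hScov (Or.inl (hrefl x))
      simpa using hx'
    · exact h
  obtain ⟨g, hg⟩ := hScnt.exists_eq_range hSne
  set K : ℕ → Set (X × X) := fun n => closure (g n) with hKdef
  have hKprop : ∀ n, IsClosed (K n) ∧ IsNowhereDense (K n) := fun n =>
    ⟨isClosed_closure, (hSnwd (g n) (hg ▸ Set.mem_range_self n)).closure⟩
  have hKcov : {p : X × X | Q p.1 p.2 ∨ Q p.2 p.1} ⊆ ⋃ n, K n := by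
    refine hScov.trans ?_
    rw [hg, Set.sUnion_range]
    exact Set.iUnion_mono fun n => subset_closure
  set L : ℕ → Set (X × X) :=
    fun n => Nat.rec (K 0) (fun m Lm => Lm ∪ K (m + 1)) n with hLdef
  have hLsucc : ∀ n, L (n + 1) = L n ∪ K (n + 1) := fun n => rfl
  have hLprop : ∀ n, IsClosed (L n) ∧ IsNowhereDense (L n) := by
    intro n
    induction n with
    | zero => exact hKprop 0
    | succ n ih => rw [hLsucc]; exact nwd_union ih (hKprop (n + 1))
  have hLmono : Monotone L :=
    monotone_nat_of_le_succ fun n => by rw [hLsucc]; exact Set.subset_union_left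
  have hKL : ∀ n, K n ⊆ L n := by
    intro n
    cases n with
    | zero => exact subset_rfl
    | succ n => rw [hLsucc]; exact Set.subset_union_right
  obtain ⟨f0, hf0⟩ := mycielski L hLprop x hLmono
  have hincomp : ∀ α β : ℕ → Bool, α ≠ β →
      ¬ Q (f0 α) (f0 β) ∧ ¬ Q (f0 β) (f0 α) := by
    intro α β hne
    constructor
    · intro hQab
      have hmemR : ((f0 α, f0 β) : X × X) ∈ {p : X × X | Q p.1 p.2 ∨ Q p.2 p.1} :=
        Or.inl hQab
      obtain ⟨n, hn⟩ := Set.mem_iUnion.1 (hKcov hmemR)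
      exact hf0 α β hne n (hKL n hn)
    · intro hQba
      have hmemR : ((f0 α, f0 β) : X × X) ∈ {p : X × X | Q p.1 p.2 ∨ Q p.2 p.1} :=
        Or.inr hQba
      obtain ⟨n, hn⟩ := Set.mem_iUnion.1 (hKcov hmemR)
      exact hf0 α β hne n (hKL n hn)
  refine ⟨hQ_meager.mono fun p hp => hp.1, ?_⟩
  set χ : Set ℕ → (ℕ → Bool) := fun I n => if n ∈ I then true else false with hχ
  have hχinj : ∀ I J : Set ℕ, I ≠ J → χ I ≠ χ J := by
    intro I J hIJ h
    apply hIJ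
    ext n
    have hfn := congrFun h n
    by_cases hn : n ∈ I <;> by_cases hm : n ∈ J <;>
      simp [hχ, hn, hm] at hfn ⊢ <;> tauto
  refine ⟨fun I => f0 (χ I), ?_, fun I J hIJ => hincomp _ _ (hχinj I J hIJ)⟩
  intro I J hfeq
  by_contra hIJ
  apply (hincomp _ _ (hχinj I J hIJ)).1
  rw [show f0 (χ I) = f0 (χ J) from hfeq] at *
  exact hrefl (f0 (χ J))
end
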